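/- arXiv:2605.09215 — 2 statements merged into one kernel-verified Lean document; each statement's English description precedes it below -/
import Mathlib

section
/- Let m ≥ 1 and n = 2m+1, and let C_0(n) be the fat parity class (the class of points with x + y even). Suppose nonnegative reals a_0,…,a_m and b_0,…,b_m satisfy a_u + a_{m−v} + b_{u+v} + b_{u−v} ≥ 1 for all integers u, v with 0 ≤ v ≤ u and u + v ≤ m. Then every no-three-in-line set S ⊆ C_0(n) satisfies |S| ≤ 8·Σ_{i=0}^{m−1}(a_i + b_i) + 4(a_m + b_m). -/
/-- The `n × n` integer grid `G_n = {0,…,n−1} × {0,…,n−1} ⊆ ℤ²`. -/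
noncomputable def grid (n : ℕ) : Finset (ℤ × ℤ) :=
  Finset.Icc (0 : ℤ) ((n : ℤ) - 1) ×ˢ Finset.Icc (0 : ℤ) ((n : ℤ) - 1)

/-- The parity (checkerboard) class `C_ε(n) = {(x,y) ∈ G_n : x + y ≡ ε (mod 2)}`. -/
noncomputable def gridClass (n : ℕ) (ε : ℕ) : Finset (ℤ × ℤ) :=
  (grid n).filter (fun P => (P.1 + P.2) % 2 = (ε : ℤ))

/-- Three points of `ℤ²` are collinear. -/
def Collinear3 (P Q R : ℤ × ℤ) : Prop :=
  (Q.1 - P.1) * (R.2 - P.2) = (R.1 - P.1) * (Q.2 - P.2)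

/-- A finite set is no-three-in-line if no three distinct points of it are collinear. -/
def NTIL (S : Finset (ℤ × ℤ)) : Prop :=
  ∀ P ∈ S, ∀ Q ∈ S, ∀ R ∈ S, P ≠ Q → P ≠ R → Q ≠ R → ¬ Collinear3 P Q R

/- collinearity lemmas -/
lemma coll_row (P Q R : ℤ × ℤ) (h1 : P.2 = Q.2) (h2 : P.2 = R.2) : Collinear3 P Q R := by
  unfold Collinear3; linear_combination (R.1 - P.1) * h1 - (Q.1 - P.1) * h2

lemma coll_col (P Q R : ℤ × ℤ) (h1 : P.1 = Q.1) (h2 : P.1 = R.1) : Collinear3 P Q R := by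
  unfold Collinear3; linear_combination -(R.2 - P.2) * h1 + (Q.2 - P.2) * h2

lemma coll_diag (P Q R : ℤ × ℤ) (h1 : P.1 + P.2 = Q.1 + Q.2) (h2 : P.1 + P.2 = R.1 + R.2) :
    Collinear3 P Q R := by
  unfold Collinear3; linear_combination -(R.2 - P.2) * h1 + (Q.2 - P.2) * h2

lemma coll_anti (P Q R : ℤ × ℤ) (h1 : P.1 - P.2 = Q.1 - Q.2) (h2 : P.1 - P.2 = R.1 - R.2) :
    Collinear3 P Q R := by
  unfold Collinear3; linear_combination -(R.2 - P.2) * h1 + (Q.2 - P.2) * h2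

lemma filter_card_le_two (S : Finset (ℤ × ℤ)) (hN : NTIL S) (pred : ℤ × ℤ → Prop)
    [DecidablePred pred] (hcoll : ∀ P Q R : ℤ × ℤ, pred P → pred Q → pred R → Collinear3 P Q R) :
    (S.filter pred).card ≤ 2 := by
  by_contra h
  push_neg at h
  obtain ⟨P, Q, R, hP, hQ, hR, h1, h2, h3⟩ := Finset.two_lt_card_iff.mp h
  simp only [Finset.mem_filter] at hP hQ hR
  exact hN P hP.1 Q hQ.1 R hR.1 h1 h2 h3 (hcoll _ _ _ hP.2 hQ.2 hR.2)

lemma sum_comp_le (S : Finset (ℤ × ℤ)) (g : ℤ × ℤ → ℤ) (I : Finset ℤ) (F : ℤ → ℝ)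
    (hmap : ∀ P ∈ S, g P ∈ I)
    (hcard : ∀ s : ℤ, (S.filter (fun P => g P = s)).card ≤ 2)
    (hF : ∀ s : ℤ, 0 ≤ F s) :
    ∑ P ∈ S, F (g P) ≤ ∑ s ∈ I, 2 * F s := by
  rw [← Finset.sum_fiberwise_of_maps_to hmap (fun P => F (g P))]
  apply Finset.sum_le_sum
  intro s _
  have : ∑ P ∈ S.filter (fun P => g P = s), F (g P)
      = ∑ P ∈ S.filter (fun P => g P = s), F s := by
    apply Finset.sum_congr rfl
    intro P hP
    rw [(Finset.mem_filter.mp hP).2]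
  rw [this, Finset.sum_const, nsmul_eq_mul]
  have := hcard s
  have h2 : ((S.filter (fun P => g P = s)).card : ℝ) ≤ 2 := by exact_mod_cast this
  nlinarith [hF s]

lemma sum_tent (m : ℕ) (c : ℕ → ℝ) :
    ∑ j ∈ Finset.range (2 * m + 1), c (m - ((m - j) + (j - m)))
      = 2 * (∑ i ∈ Finset.range m, c i) + c m := by
  have hsplit : ∑ j ∈ Finset.Ico 0 (m+1), c (m - ((m - j) + (j - m)))
      + ∑ j ∈ Finset.Ico (m+1) (2*m+1), c (m - ((m - j) + (j - m)))
      = ∑ j ∈ Finset.Ico 0 (2*m+1), c (m - ((m - j) + (j - m))) :=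
    Finset.sum_Ico_consecutive _ (by omega) (by omega)
  rw [Finset.range_eq_Ico, ← hsplit]
  have e1 : ∑ j ∈ Finset.Ico 0 (m+1), c (m - ((m - j) + (j - m)))
      = ∑ i ∈ Finset.range m, c i + c m := by
    rw [← Finset.range_eq_Ico]
    have : ∀ j ∈ Finset.range (m+1), c (m - ((m - j) + (j - m))) = c j := by
      intro j hj
      have : j ≤ m := by simpa [Nat.lt_succ_iff] using hj
      congr 1; omega
    rw [Finset.sum_congr rfl this, Finset.sum_range_succ]
  have e2 : ∑ j ∈ Finset.Ico (m+1) (2*m+1), c (m - ((m - j) + (j - m)))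
      = ∑ i ∈ Finset.range m, c i := by
    rw [Finset.sum_Ico_eq_sum_range]
    have h1 : 2*m+1 - (m+1) = m := by omega
    rw [h1]
    have : ∀ i ∈ Finset.range m, c (m - ((m - (m+1+i)) + ((m+1+i) - m))) = c (m - 1 - i) := by
      intro i hi; congr 1; omega
    rw [Finset.sum_congr rfl this, Finset.sum_range_reflect]
  rw [e1, e2]; ring

lemma pointwise (m : ℕ) (a b : ℕ → ℝ)
    (hcon : ∀ u v : ℕ, v ≤ u → u + v ≤ m →
      1 ≤ a u + a (m - v) + b (u + v) + b (u - v))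
    (x y : ℤ) (hx0 : 0 ≤ x) (hx1 : x ≤ 2*m) (hy0 : 0 ≤ y) (hy1 : y ≤ 2*m)
    (hpar : (x + y) % 2 = 0) :
    1 ≤ a (m - (x + y - 2*(m:ℤ)).natAbs / 2) + a (m - (x - y).natAbs / 2)
      + b (m - (x - (m:ℤ)).natAbs) + b (m - (y - (m:ℤ)).natAbs) := by
  set d1 := (x + y - 2*(m:ℤ)).natAbs / 2 with hd1
  set d2 := (x - y).natAbs / 2 with hd2
  set p := (x - (m:ℤ)).natAbs with hp
  set q := (y - (m:ℤ)).natAbs with hq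
  have k1 : d1 + d2 = max p q := by omega
  have k3 : max p q ≤ m := by omega
  rcases le_total d1 d2 with h | h
  · have k2 : d2 - d1 = min p q := by omega
    have H := hcon (m - d2) d1 (by omega) (by omega)
    rcases le_total p q with h' | h'
    · rw [show (m - d2) + d1 = m - p by omega, show (m - d2) - d1 = m - q by omega] at H
      linarith
    · rw [show (m - d2) + d1 = m - q by omega, show (m - d2) - d1 = m - p by omega] at H
      linarith
  · have k2 : d1 - d2 = min p q := by omega
    have H := hcon (m - d1) d2 (by omega) (by omega)
    rcases le_total p q with h' | h'
    · rw [show (m - d1) + d2 = m - p by omega, show (m - d1) - d2 = m - q by omega] at H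
      linarith
    · rw [show (m - d1) + d2 = m - q by omega, show (m - d1) - d2 = m - p by omega] at H
      linarith

/-- Odd side length `n = 2m+1`, fat class: a feasible symmetry-reduced dual weighting
bounds every no-three-in-line subset of the fat parity class `C_0(2m+1)`. -/
theorem odd_fat_reduced_dual_bound (m : ℕ) (hm : 1 ≤ m) (a b : ℕ → ℝ)
    (ha : ∀ i ≤ m, 0 ≤ a i) (hb : ∀ i ≤ m, 0 ≤ b i)
    (hcon : ∀ u v : ℕ, v ≤ u → u + v ≤ m →
      1 ≤ a u + a (m - v) + b (u + v) + b (u - v))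
    (S : Finset (ℤ × ℤ)) (hS : S ⊆ gridClass (2 * m + 1) 0) (hNTIL : NTIL S) :
    (S.card : ℝ) ≤ 8 * (∑ i ∈ Finset.range m, (a i + b i)) + 4 * (a m + b m) := by
  classical
  have hmem : ∀ P ∈ S, 0 ≤ P.1 ∧ P.1 ≤ 2*(m:ℤ) ∧ 0 ≤ P.2 ∧ P.2 ≤ 2*(m:ℤ)
      ∧ (P.1 + P.2) % 2 = 0 := by
    intro P hP
    have h := hS hP
    simp only [gridClass, grid, Finset.mem_filter, Finset.mem_product, Finset.mem_Icc] at h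
    push_cast at h
    obtain ⟨⟨⟨hx0, hx1⟩, hy0, hy1⟩, hpar⟩ := h
    refine ⟨hx0, by omega, hy0, by omega, by omega⟩
  set F1 : ℤ → ℝ := fun s => a (m - (s - 2*(m:ℤ)).natAbs / 2) with hF1
  set F2 : ℤ → ℝ := fun s => a (m - s.natAbs / 2) with hF2
  set F3 : ℤ → ℝ := fun s => b (m - (s - (m:ℤ)).natAbs) with hF3
  have hF1nn : ∀ s : ℤ, 0 ≤ F1 s := fun s => ha _ (Nat.sub_le _ _)
  have hF2nn : ∀ s : ℤ, 0 ≤ F2 s := fun s => ha _ (Nat.sub_le _ _)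
  have hF3nn : ∀ s : ℤ, 0 ≤ F3 s := fun s => hb _ (Nat.sub_le _ _)
  have key : ∀ P ∈ S, (1:ℝ) ≤ F1 (P.1 + P.2) + F2 (P.1 - P.2) + F3 P.1 + F3 P.2 := by
    intro P hP
    obtain ⟨h1, h2, h3, h4, h5⟩ := hmem P hP
    have := pointwise m a b hcon P.1 P.2 h1 (by exact_mod_cast h2) h3 (by exact_mod_cast h4) h5
    simpa [hF1, hF2, hF3] using this
  have step1 : (S.card : ℝ) ≤ ∑ P ∈ S, (F1 (P.1 + P.2) + F2 (P.1 - P.2) + F3 P.1 + F3 P.2) := by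
    calc (S.card : ℝ) = ∑ _P ∈ S, (1:ℝ) := by simp
    _ ≤ _ := Finset.sum_le_sum key
  have split : ∑ P ∈ S, (F1 (P.1 + P.2) + F2 (P.1 - P.2) + F3 P.1 + F3 P.2)
      = ∑ P ∈ S, F1 (P.1 + P.2) + ∑ P ∈ S, F2 (P.1 - P.2)
        + ∑ P ∈ S, F3 P.1 + ∑ P ∈ S, F3 P.2 := by
    simp [Finset.sum_add_distrib]
  -- index sets
  set I1 : Finset ℤ := (Finset.range (2*m+1)).image (fun j : ℕ => 2*(j:ℤ)) with hI1
  set I2 : Finset ℤ := (Finset.range (2*m+1)).image (fun j : ℕ => 2*(j:ℤ) - 2*m) with hI2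
  set I3 : Finset ℤ := (Finset.range (2*m+1)).image (fun j : ℕ => (j:ℤ)) with hI3
  have hA1 : ∑ P ∈ S, F1 (P.1 + P.2) ≤ ∑ s ∈ I1, 2 * F1 s := by
    apply sum_comp_le S (fun P => P.1 + P.2) I1 F1
    · intro P hP
      obtain ⟨h1, h2, h3, h4, h5⟩ := hmem P hP
      simp only [hI1, Finset.mem_image, Finset.mem_range]
      exact ⟨(P.1 + P.2).toNat / 2, by omega, by omega⟩
    · intro s
      exact filter_card_le_two S hNTIL _ (fun P Q R hP hQ hR =>
        coll_diag P Q R (by omega) (by omega))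
    · exact hF1nn
  have hA2 : ∑ P ∈ S, F2 (P.1 - P.2) ≤ ∑ s ∈ I2, 2 * F2 s := by
    apply sum_comp_le S (fun P => P.1 - P.2) I2 F2
    · intro P hP
      obtain ⟨h1, h2, h3, h4, h5⟩ := hmem P hP
      simp only [hI2, Finset.mem_image, Finset.mem_range]
      exact ⟨(P.1 - P.2 + 2*m).toNat / 2, by omega, by omega⟩
    · intro s
      exact filter_card_le_two S hNTIL _ (fun P Q R hP hQ hR =>
        coll_anti P Q R (by omega) (by omega))
    · exact hF2nn
  have hA3 : ∑ P ∈ S, F3 P.1 ≤ ∑ s ∈ I3, 2 * F3 s := by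
    apply sum_comp_le S (fun P => P.1) I3 F3
    · intro P hP
      obtain ⟨h1, h2, h3, h4, h5⟩ := hmem P hP
      simp only [hI3, Finset.mem_image, Finset.mem_range]
      exact ⟨P.1.toNat, by omega, by omega⟩
    · intro s
      exact filter_card_le_two S hNTIL _ (fun P Q R hP hQ hR =>
        coll_col P Q R (by omega) (by omega))
    · exact hF3nn
  have hA4 : ∑ P ∈ S, F3 P.2 ≤ ∑ s ∈ I3, 2 * F3 s := by
    apply sum_comp_le S (fun P => P.2) I3 F3
    · intro P hP
      obtain ⟨h1, h2, h3, h4, h5⟩ := hmem P hP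
      simp only [hI3, Finset.mem_image, Finset.mem_range]
      exact ⟨P.2.toNat, by omega, by omega⟩
    · intro s
      exact filter_card_le_two S hNTIL _ (fun P Q R hP hQ hR =>
        coll_row P Q R (by omega) (by omega))
    · exact hF3nn
  -- evaluate the index sums
  have inj1 : Set.InjOn (fun j : ℕ => 2*(j:ℤ)) (Finset.range (2*m+1)) := by
    intro i _ j _ h; simp only at h; omega
  have inj2 : Set.InjOn (fun j : ℕ => 2*(j:ℤ) - 2*(m:ℤ)) (Finset.range (2*m+1)) := by
    intro i _ j _ h; simp only at h; omega
  have inj3 : Set.InjOn (fun j : ℕ => (j:ℤ)) (Finset.range (2*m+1)) := by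
    intro i _ j _ h; simp only at h; omega
  have eI1 : ∑ s ∈ I1, 2 * F1 s = 2 * (2 * (∑ i ∈ Finset.range m, a i) + a m) := by
    rw [hI1, Finset.sum_image (fun x hx y hy h => inj1 (by simpa using hx) (by simpa using hy) h)]
    have : ∀ j ∈ Finset.range (2*m+1),
        2 * F1 (2*(j:ℤ)) = 2 * a (m - ((m - j) + (j - m))) := by
      intro j _
      simp only [hF1]
      congr 2
      omega
    rw [Finset.sum_congr rfl this, ← Finset.mul_sum, sum_tent]
  have eI2 : ∑ s ∈ I2, 2 * F2 s = 2 * (2 * (∑ i ∈ Finset.range m, a i) + a m) := by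
    rw [hI2, Finset.sum_image (fun x hx y hy h => inj2 (by simpa using hx) (by simpa using hy) h)]
    have : ∀ j ∈ Finset.range (2*m+1),
        2 * F2 (2*(j:ℤ) - 2*m) = 2 * a (m - ((m - j) + (j - m))) := by
      intro j _
      simp only [hF2]
      congr 2
      omega
    rw [Finset.sum_congr rfl this, ← Finset.mul_sum, sum_tent]
  have eI3 : ∑ s ∈ I3, 2 * F3 s = 2 * (2 * (∑ i ∈ Finset.range m, b i) + b m) := by
    rw [hI3, Finset.sum_image (fun x hx y hy h => inj3 (by simpa using hx) (by simpa using hy) h)]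
    have : ∀ j ∈ Finset.range (2*m+1),
        2 * F3 (j:ℤ) = 2 * b (m - ((m - j) + (j - m))) := by
      intro j _
      simp only [hF3]
      congr 2
      omega
    rw [Finset.sum_congr rfl this, ← Finset.mul_sum, sum_tent]
  rw [eI1] at hA1
  rw [eI2] at hA2
  rw [eI3] at hA3
  rw [eI3] at hA4
  rw [split] at step1
  have expand : ∑ i ∈ Finset.range m, (a i + b i)
      = ∑ i ∈ Finset.range m, a i + ∑ i ∈ Finset.range m, b i := Finset.sum_add_distrib
  rw [expand]
  linarith
end

section
/- Let m ≥ 1 and n = 2m+1, and let C_1(n) be the thin parity class (the class of points with x + y odd). Suppose nonnegative reals a_0,…,a_{m−1} and b_0,…,b_m satisfy a_u + a_{m−v−1} + b_{u+v+1} + b_{u−v} ≥ 1 for all integers u, v with 0 ≤ v ≤ u and u + v ≤ m−1. Then every no-three-in-line set S ⊆ C_1(n) satisfies |S| ≤ 8·Σ_{i=0}^{m−1} a_i + 8·Σ_{i=0}^{m−1} b_i + 4 b_m. -/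
/-- Index of the anti-diagonal class of a point (for the dual weighting). -/
def ntilF1 (m : ℕ) (P : ℤ × ℤ) : ℕ :=
  (((min (P.1 + P.2) (4*(m:ℤ) - P.1 - P.2)) - 1) / 2).toNat

/-- Index of the diagonal class of a point. -/
def ntilF2 (m : ℕ) (P : ℤ × ℤ) : ℕ :=
  ((2*(m:ℤ) - 1 - max (P.1 - P.2) (P.2 - P.1)) / 2).toNat

/-- Index of the row class of a point. -/
def ntilG1 (m : ℕ) (P : ℤ × ℤ) : ℕ := (min P.1 (2*(m:ℤ) - P.1)).toNat

/-- Index of the column class of a point. -/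
def ntilG2 (m : ℕ) (P : ℤ × ℤ) : ℕ := (min P.2 (2*(m:ℤ) - P.2)).toNat

lemma line_le_two (S : Finset (ℤ × ℤ)) (hNTIL : NTIL S) (A B C : ℤ)
    (hAB : ¬ (A = 0 ∧ B = 0)) :
    (S.filter (fun P => A * P.1 + B * P.2 = C)).card ≤ 2 := by
  by_contra h
  push_neg at h
  rw [Finset.two_lt_card_iff] at h
  obtain ⟨P, Q, R, hP, hQ, hR, hPQ, hPR, hQR⟩ := h
  simp only [Finset.mem_filter] at hP hQ hR
  refine hNTIL P hP.1 Q hQ.1 R hR.1 hPQ hPR hQR ?_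
  unfold Collinear3
  have h1 : A * (Q.1 - P.1) = B * (P.2 - Q.2) := by linear_combination hQ.2 - hP.2
  have h2 : A * (R.1 - P.1) = B * (P.2 - R.2) := by linear_combination hR.2 - hP.2
  rcases (not_and_or.mp hAB) with hA | hB
  · have key : A * ((Q.1 - P.1) * (R.2 - P.2)) = A * ((R.1 - P.1) * (Q.2 - P.2)) := by
      linear_combination (R.2 - P.2) * h1 - (Q.2 - P.2) * h2
    exact mul_left_cancel₀ hA key
  · have key : B * ((Q.1 - P.1) * (R.2 - P.2)) = B * ((R.1 - P.1) * (Q.2 - P.2)) := by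
      linear_combination (Q.1 - P.1) * h2 - (R.1 - P.1) * h1
    exact mul_left_cancel₀ hB key

lemma fiber_le_four (S : Finset (ℤ × ℤ)) (hNTIL : NTIL S) (f : ℤ × ℤ → ℕ) (i : ℕ)
    (A1 B1 C1 A2 B2 C2 : ℤ) (h1 : ¬ (A1 = 0 ∧ B1 = 0)) (h2 : ¬ (A2 = 0 ∧ B2 = 0))
    (hline : ∀ P ∈ S, f P = i → A1 * P.1 + B1 * P.2 = C1 ∨ A2 * P.1 + B2 * P.2 = C2) :
    (S.filter (fun P => f P = i)).card ≤ 4 := by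
  classical
  have hsub : S.filter (fun P => f P = i) ⊆
      S.filter (fun P => A1 * P.1 + B1 * P.2 = C1) ∪
        S.filter (fun P => A2 * P.1 + B2 * P.2 = C2) := by
    intro P hP
    simp only [Finset.mem_filter, Finset.mem_union] at hP ⊢
    rcases hline P hP.1 hP.2 with h | h
    · exact Or.inl ⟨hP.1, h⟩
    · exact Or.inr ⟨hP.1, h⟩
  calc (S.filter (fun P => f P = i)).card
      ≤ (S.filter (fun P => A1 * P.1 + B1 * P.2 = C1) ∪
          S.filter (fun P => A2 * P.1 + B2 * P.2 = C2)).card := Finset.card_le_card hsub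
    _ ≤ (S.filter (fun P => A1 * P.1 + B1 * P.2 = C1)).card +
          (S.filter (fun P => A2 * P.1 + B2 * P.2 = C2)).card := Finset.card_union_le _ _
    _ ≤ 2 + 2 := Nat.add_le_add (line_le_two S hNTIL _ _ _ h1) (line_le_two S hNTIL _ _ _ h2)

lemma sum_comp_le_s4 {α : Type*} [DecidableEq α] (S : Finset α) (f : α → ℕ) (t : Finset ℕ)
    (w : ℕ → ℝ) (K : ℕ → ℕ) (hmap : ∀ x ∈ S, f x ∈ t) (hw : ∀ i ∈ t, 0 ≤ w i)
    (hcard : ∀ i ∈ t, (S.filter (fun x => f x = i)).card ≤ K i) :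
    ∑ x ∈ S, w (f x) ≤ ∑ i ∈ t, (K i : ℝ) * w i := by
  classical
  rw [← Finset.sum_fiberwise_of_maps_to hmap (fun x => w (f x))]
  refine Finset.sum_le_sum fun i hi => ?_
  have : ∑ x ∈ S.filter (fun x => f x = i), w (f x)
      = ((S.filter (fun x => f x = i)).card : ℝ) * w i := by
    rw [Finset.sum_congr rfl (fun x hx => by
      rw [(Finset.mem_filter.mp hx).2]), Finset.sum_const, nsmul_eq_mul]
  rw [this]
  exact mul_le_mul_of_nonneg_right (by exact_mod_cast hcard i hi) (hw i hi)

/-- The pointwise covering inequality for a thin point. -/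
lemma ntil_cover (m : ℕ) (hm : 1 ≤ m) (a b : ℕ → ℝ)
    (hcon : ∀ u v : ℕ, v ≤ u → u + v ≤ m - 1 →
      1 ≤ a u + a (m - v - 1) + b (u + v + 1) + b (u - v))
    (P : ℤ × ℤ) (hx : 0 ≤ P.1) (hx2 : P.1 ≤ 2*m) (hy : 0 ≤ P.2) (hy2 : P.2 ≤ 2*m)
    (hpar : (P.1 + P.2) % 2 = 1) :
    1 ≤ a (ntilF1 m P) + a (ntilF2 m P) + b (ntilG1 m P) + b (ntilG2 m P) := by
  obtain ⟨x, y⟩ := P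
  simp only at hx hx2 hy hy2 hpar
  set k1 := ntilF1 m (x, y) with hk1def
  set k2 := ntilF2 m (x, y) with hk2def
  set j1 := ntilG1 m (x, y) with hj1def
  set j2 := ntilG2 m (x, y) with hj2def
  have H1 : 2*(k1:ℤ) + 1 = min (x+y) (4*(m:ℤ) - x - y) := by
    rw [hk1def]; unfold ntilF1; simp only; omega
  have H2 : 2*(k2:ℤ) + 1 = 2*(m:ℤ) - max (x - y) (y - x) := by
    rw [hk2def]; unfold ntilF2; simp only; omega
  have H3 : (j1:ℤ) = min x (2*(m:ℤ) - x) := by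
    rw [hj1def]; unfold ntilG1; simp only; omega
  have H4 : (j2:ℤ) = min y (2*(m:ℤ) - y) := by
    rw [hj2def]; unfold ntilG2; simp only; omega
  rcases le_total k1 k2 with hk | hk <;> rcases le_total j1 j2 with hj | hj
  · have h := hcon k1 (m - 1 - k2) (by omega) (by omega)
    have e1 : m - (m - 1 - k2) - 1 = k2 := by omega
    have e2 : k1 + (m - 1 - k2) + 1 = j2 := by omega
    have e3 : k1 - (m - 1 - k2) = j1 := by omega
    rw [e1, e2, e3] at h; linarith
  · have h := hcon k1 (m - 1 - k2) (by omega) (by omega)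
    have e1 : m - (m - 1 - k2) - 1 = k2 := by omega
    have e2 : k1 + (m - 1 - k2) + 1 = j1 := by omega
    have e3 : k1 - (m - 1 - k2) = j2 := by omega
    rw [e1, e2, e3] at h; linarith
  · have h := hcon k2 (m - 1 - k1) (by omega) (by omega)
    have e1 : m - (m - 1 - k1) - 1 = k1 := by omega
    have e2 : k2 + (m - 1 - k1) + 1 = j2 := by omega
    have e3 : k2 - (m - 1 - k1) = j1 := by omega
    rw [e1, e2, e3] at h; linarith
  · have h := hcon k2 (m - 1 - k1) (by omega) (by omega)
    have e1 : m - (m - 1 - k1) - 1 = k1 := by omega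
    have e2 : k2 + (m - 1 - k1) + 1 = j1 := by omega
    have e3 : k2 - (m - 1 - k1) = j2 := by omega
    rw [e1, e2, e3] at h; linarith

/-- Odd side length `n = 2m+1`, thin class: a feasible symmetry-reduced dual weighting
bounds every no-three-in-line subset of the thin parity class `C_1(2m+1)`. -/
theorem odd_thin_reduced_dual_bound (m : ℕ) (hm : 1 ≤ m) (a b : ℕ → ℝ)
    (ha : ∀ i ≤ m - 1, 0 ≤ a i) (hb : ∀ i ≤ m, 0 ≤ b i)
    (hcon : ∀ u v : ℕ, v ≤ u → u + v ≤ m - 1 →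
      1 ≤ a u + a (m - v - 1) + b (u + v + 1) + b (u - v))
    (S : Finset (ℤ × ℤ)) (hS : S ⊆ gridClass (2 * m + 1) 1) (hNTIL : NTIL S) :
    (S.card : ℝ) ≤ 8 * (∑ i ∈ Finset.range m, a i) + 8 * (∑ i ∈ Finset.range m, b i)
      + 4 * b m := by
  classical
  have hmem : ∀ P ∈ S, 0 ≤ P.1 ∧ P.1 ≤ 2*(m:ℤ) ∧ 0 ≤ P.2 ∧ P.2 ≤ 2*(m:ℤ) ∧
      (P.1 + P.2) % 2 = 1 := by
    intro P hP
    have := hS hP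
    simp only [gridClass, grid, Finset.mem_filter, Finset.mem_product, Finset.mem_Icc] at this
    push_cast at this
    refine ⟨this.1.1.1, by linarith [this.1.1.2], this.1.2.1, by linarith [this.1.2.2], ?_⟩
    simpa using this.2
  -- pointwise covering
  have hpt : ∀ P ∈ S, (1:ℝ) ≤ a (ntilF1 m P) + a (ntilF2 m P) + b (ntilG1 m P)
      + b (ntilG2 m P) := by
    intro P hP
    obtain ⟨h1, h2, h3, h4, h5⟩ := hmem P hP
    exact ntil_cover m hm a b hcon P h1 h2 h3 h4 h5
  have hstep : (S.card : ℝ) ≤ ∑ P ∈ S, (a (ntilF1 m P) + a (ntilF2 m P) + b (ntilG1 m P)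
      + b (ntilG2 m P)) := by
    calc (S.card : ℝ) = ∑ _P ∈ S, (1:ℝ) := by simp
      _ ≤ _ := Finset.sum_le_sum hpt
  have hsplit : ∑ P ∈ S, (a (ntilF1 m P) + a (ntilF2 m P) + b (ntilG1 m P) + b (ntilG2 m P))
      = (∑ P ∈ S, a (ntilF1 m P)) + (∑ P ∈ S, a (ntilF2 m P)) + (∑ P ∈ S, b (ntilG1 m P))
        + (∑ P ∈ S, b (ntilG2 m P)) := by
    rw [← Finset.sum_add_distrib, ← Finset.sum_add_distrib, ← Finset.sum_add_distrib]
  -- bound for the anti-diagonal sum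
  have hA1 : ∑ P ∈ S, a (ntilF1 m P) ≤ ∑ i ∈ Finset.range m, (4:ℝ) * a i := by
    have := sum_comp_le_s4 S (ntilF1 m) (Finset.range m) a (fun _ => 4)
      (fun P hP => by
        obtain ⟨h1, h2, h3, h4, h5⟩ := hmem P hP
        simp only [Finset.mem_range]; unfold ntilF1; omega)
      (fun i hi => ha i (by simp only [Finset.mem_range] at hi; omega))
      (fun i hi => by
        refine fiber_le_four S hNTIL _ i 1 1 (2*i+1) 1 1 (4*m - (2*i+1)) (by simp) (by simp) ?_
        intro P hP hfi
        obtain ⟨h1, h2, h3, h4, h5⟩ := hmem P hP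
        unfold ntilF1 at hfi
        omega)
    calc ∑ P ∈ S, a (ntilF1 m P) ≤ ∑ i ∈ Finset.range m, ((4:ℕ):ℝ) * a i := this
      _ = ∑ i ∈ Finset.range m, (4:ℝ) * a i := by norm_num
  -- bound for the diagonal sum
  have hA2 : ∑ P ∈ S, a (ntilF2 m P) ≤ ∑ i ∈ Finset.range m, (4:ℝ) * a i := by
    have := sum_comp_le_s4 S (ntilF2 m) (Finset.range m) a (fun _ => 4)
      (fun P hP => by
        obtain ⟨h1, h2, h3, h4, h5⟩ := hmem P hP
        simp only [Finset.mem_range]; unfold ntilF2; omega)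
      (fun i hi => ha i (by simp only [Finset.mem_range] at hi; omega))
      (fun i hi => by
        refine fiber_le_four S hNTIL _ i 1 (-1) (2*(m:ℤ) - 1 - 2*i) 1 (-1)
          (-(2*(m:ℤ) - 1 - 2*i)) (by simp) (by simp) ?_
        intro P hP hfi
        obtain ⟨h1, h2, h3, h4, h5⟩ := hmem P hP
        unfold ntilF2 at hfi
        omega)
    calc ∑ P ∈ S, a (ntilF2 m P) ≤ ∑ i ∈ Finset.range m, ((4:ℕ):ℝ) * a i := this
      _ = ∑ i ∈ Finset.range m, (4:ℝ) * a i := by norm_num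
  -- bound for the row sum
  have hB1 : ∑ P ∈ S, b (ntilG1 m P)
      ≤ ∑ i ∈ Finset.range m, (4:ℝ) * b i + 2 * b m := by
    have key := sum_comp_le_s4 S (ntilG1 m) (Finset.range (m+1)) b
      (fun i => if i = m then 2 else 4)
      (fun P hP => by
        obtain ⟨h1, h2, h3, h4, h5⟩ := hmem P hP
        simp only [Finset.mem_range]; unfold ntilG1; omega)
      (fun i hi => hb i (by simp only [Finset.mem_range] at hi; omega))
      (fun i hi => by
        by_cases him : i = m
        · simp only [him, if_pos]
          have hsub : S.filter (fun P => ntilG1 m P = m) ⊆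
              S.filter (fun P => 1 * P.1 + 0 * P.2 = (m:ℤ)) := by
            intro P hP
            simp only [Finset.mem_filter] at hP ⊢
            obtain ⟨h1, h2, h3, h4, h5⟩ := hmem P hP.1
            have := hP.2
            unfold ntilG1 at this
            exact ⟨hP.1, by omega⟩
          exact le_trans (Finset.card_le_card hsub)
            (line_le_two S hNTIL 1 0 (m:ℤ) (by simp))
        · simp only [if_neg him]
          refine fiber_le_four S hNTIL _ i 1 0 (i:ℤ) 1 0 (2*(m:ℤ) - i) (by simp) (by simp) ?_
          intro P hP hfi
          obtain ⟨h1, h2, h3, h4, h5⟩ := hmem P hP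
          unfold ntilG1 at hfi
          omega)
    have : ∑ i ∈ Finset.range (m+1), (((if i = m then 2 else 4 : ℕ)):ℝ) * b i
        = ∑ i ∈ Finset.range m, (4:ℝ) * b i + 2 * b m := by
      rw [Finset.sum_range_succ, if_pos rfl]
      have hc : ∀ i ∈ Finset.range m,
          (((if i = m then 2 else 4 : ℕ)):ℝ) * b i = (4:ℝ) * b i := by
        intro i hi
        simp only [Finset.mem_range] at hi
        rw [if_neg (by omega)]
        norm_num
      rw [Finset.sum_congr rfl hc]
      norm_num
    linarith [key, this.le, this.ge]
  -- bound for the column sum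
  have hB2 : ∑ P ∈ S, b (ntilG2 m P)
      ≤ ∑ i ∈ Finset.range m, (4:ℝ) * b i + 2 * b m := by
    have key := sum_comp_le_s4 S (ntilG2 m) (Finset.range (m+1)) b
      (fun i => if i = m then 2 else 4)
      (fun P hP => by
        obtain ⟨h1, h2, h3, h4, h5⟩ := hmem P hP
        simp only [Finset.mem_range]; unfold ntilG2; omega)
      (fun i hi => hb i (by simp only [Finset.mem_range] at hi; omega))
      (fun i hi => by
        by_cases him : i = m
        · simp only [him, if_pos]
          have hsub : S.filter (fun P => ntilG2 m P = m) ⊆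
              S.filter (fun P => 0 * P.1 + 1 * P.2 = (m:ℤ)) := by
            intro P hP
            simp only [Finset.mem_filter] at hP ⊢
            obtain ⟨h1, h2, h3, h4, h5⟩ := hmem P hP.1
            have := hP.2
            unfold ntilG2 at this
            exact ⟨hP.1, by omega⟩
          exact le_trans (Finset.card_le_card hsub)
            (line_le_two S hNTIL 0 1 (m:ℤ) (by simp))
        · simp only [if_neg him]
          refine fiber_le_four S hNTIL _ i 0 1 (i:ℤ) 0 1 (2*(m:ℤ) - i) (by simp) (by simp) ?_
          intro P hP hfi
          obtain ⟨h1, h2, h3, h4, h5⟩ := hmem P hP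
          unfold ntilG2 at hfi
          omega)
    have : ∑ i ∈ Finset.range (m+1), (((if i = m then 2 else 4 : ℕ)):ℝ) * b i
        = ∑ i ∈ Finset.range m, (4:ℝ) * b i + 2 * b m := by
      rw [Finset.sum_range_succ, if_pos rfl]
      have hc : ∀ i ∈ Finset.range m,
          (((if i = m then 2 else 4 : ℕ)):ℝ) * b i = (4:ℝ) * b i := by
        intro i hi
        simp only [Finset.mem_range] at hi
        rw [if_neg (by omega)]
        norm_num
      rw [Finset.sum_congr rfl hc]
      norm_num
    linarith [key, this.le, this.ge]
  have e4a : ∑ i ∈ Finset.range m, (4:ℝ) * a i = 4 * ∑ i ∈ Finset.range m, a i :=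
    (Finset.mul_sum _ _ _).symm
  have e4b : ∑ i ∈ Finset.range m, (4:ℝ) * b i = 4 * ∑ i ∈ Finset.range m, b i :=
    (Finset.mul_sum _ _ _).symm
  rw [hsplit] at hstep
  rw [e4a] at hA1 hA2
  rw [e4b] at hB1 hB2
  linarith
end
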